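/- Let k ≥ 1 be an integer and let μ be a Borel probability measure on the interval [0,1] such that ∫₀¹ (1−v)^{q−k} dμ(v) = 1/C(q, k) for every integer q ≥ k. Then μ is uniquely determined and its distribution function is F(v) = v^k; that is, μ([0, v]) = v^k for every v ∈ [0,1] (equivalently, μ has density k v^{k−1} with respect to Lebesgue measure). -/

import Mathlib

open MeasureTheory
open scoped NNReal ENNReal

private lemma prod_fact (m n : ℕ) :
    m.factorial * ∏ j ∈ Finset.range (n + 1), (m + 1 + j) = (m + n + 1).factorial := by
  induction n with
  | zero => simp [Nat.factorial_succ, Nat.mul_comm]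
  | succ n ih =>
      rw [Finset.prod_range_succ, ← Nat.mul_assoc, ih]
      calc (m + n + 1).factorial * (m + 1 + (n + 1))
          = ((m + n + 1) + 1) * (m + n + 1).factorial := by ring
        _ = ((m + n + 1) + 1).factorial := (Nat.factorial_succ _).symm
        _ = (m + (n + 1) + 1).factorial := congrArg Nat.factorial (by omega)

private lemma beta_nat (m n : ℕ) :
    ∫ x in (0:ℝ)..1, x ^ m * (1 - x) ^ n
      = (m.factorial * n.factorial : ℝ) / (m + n + 1).factorial := by
  have h1 : Complex.betaIntegral ((m : ℂ) + 1) ((n : ℂ) + 1)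
      = ((∫ x in (0:ℝ)..1, x ^ m * (1 - x) ^ n : ℝ) : ℂ) := by
    rw [Complex.betaIntegral]
    have hcongr : ∫ x in (0:ℝ)..1, (x:ℂ) ^ ((m:ℂ) + 1 - 1) * (1 - (x:ℂ)) ^ ((n:ℂ) + 1 - 1)
        = ∫ x in (0:ℝ)..1, ((x ^ m * (1 - x) ^ n : ℝ) : ℂ) := by
      apply intervalIntegral.integral_congr
      intro x hx
      simp only [add_sub_cancel_right]
      rw [Complex.cpow_natCast, Complex.cpow_natCast]
      push_cast
      ring
    rw [hcongr]
    exact_mod_cast RCLike.intervalIntegral_ofReal (𝕜 := ℂ)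
  have h2 := Complex.betaIntegral_eval_nat_add_one_right
    (u := (m : ℂ) + 1) (by simp; positivity) n
  have hP : ((m.factorial : ℂ)) * ∏ j ∈ Finset.range (n + 1), ((m : ℂ) + 1 + j)
      = ((m + n + 1).factorial : ℂ) := by
    exact_mod_cast congrArg (Nat.cast (R := ℂ)) (prod_fact m n)
  rw [h1] at h2
  have hf0 : ((m + n + 1).factorial : ℂ) ≠ 0 := by
    exact_mod_cast (m + n + 1).factorial_ne_zero
  have hprod0 : (∏ j ∈ Finset.range (n + 1), ((m : ℂ) + 1 + j)) ≠ 0 := by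
    intro h
    rw [h, mul_zero] at hP
    exact (Nat.cast_ne_zero (R := ℂ)).2 (m + n + 1).factorial_ne_zero hP.symm
  have key : (n.factorial : ℂ) / ∏ j ∈ Finset.range (n + 1), ((m : ℂ) + 1 + j)
      = (m.factorial : ℂ) * (n.factorial : ℂ) / ((m + n + 1).factorial : ℂ) := by
    rw [div_eq_div_iff hprod0 hf0, ← hP]
    ring
  apply Complex.ofReal_injective
  rw [h2, key]
  push_cast
  ring

/-- The comparison measure with density `k v^(k-1)` on `[0,1]`. -/
noncomputable def nuMeas (k : ℕ) : Measure ℝ :=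
  (volume.restrict (Set.Icc (0:ℝ) 1)).withDensity
    fun v => ENNReal.ofReal (k * v ^ (k - 1))

private lemma nuMeas_apply (k : ℕ) {s : Set ℝ} (hs : MeasurableSet s) :
    nuMeas k s = ∫⁻ x in s ∩ Set.Icc (0:ℝ) 1, ENNReal.ofReal (k * x ^ (k - 1)) := by
  rw [nuMeas, withDensity_apply _ hs, Measure.restrict_restrict hs]

private lemma nuMeas_compl (k : ℕ) : nuMeas k (Set.Icc (0:ℝ) 1)ᶜ = 0 := by
  rw [nuMeas_apply k measurableSet_Icc.compl, Set.compl_inter_self,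
    Measure.restrict_empty, lintegral_zero_measure]

private lemma nuMeas_Icc (k : ℕ) (hk : 1 ≤ k) {v : ℝ} (hv : v ∈ Set.Icc (0:ℝ) 1) :
    nuMeas k (Set.Icc 0 v) = ENNReal.ofReal (v ^ k) := by
  obtain ⟨hv0, hv1⟩ := hv
  rw [nuMeas_apply k measurableSet_Icc,
    Set.inter_eq_left.2 (Set.Icc_subset_Icc le_rfl hv1)]
  have hcont : ContinuousOn (fun x : ℝ => (k : ℝ) * x ^ (k - 1)) (Set.Icc 0 v) :=
    (continuous_const.mul (continuous_pow _)).continuousOn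
  have hint : IntegrableOn (fun x : ℝ => (k : ℝ) * x ^ (k - 1)) (Set.Icc 0 v) volume :=
    hcont.integrableOn_compact isCompact_Icc
  rw [← ofReal_integral_eq_lintegral_ofReal hint]
  · congr 1
    rw [MeasureTheory.integral_Icc_eq_integral_Ioc,
      ← intervalIntegral.integral_of_le hv0]
    rw [intervalIntegral.integral_const_mul, integral_pow]
    have hkk : (k - 1) + 1 = k := Nat.sub_add_cancel hk
    rw [hkk]
    have : (0:ℝ) ^ k = 0 := zero_pow (by omega)
    rw [this]
    field_simp
    rw [Nat.cast_sub hk]; push_cast; ring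
  · refine (ae_restrict_iff' measurableSet_Icc).2 (ae_of_all _ fun x hx => ?_)
    have : (0:ℝ) ≤ x := hx.1
    positivity

private lemma nuMeas_prob (k : ℕ) (hk : 1 ≤ k) : IsProbabilityMeasure (nuMeas k) := by
  constructor
  have h1 : nuMeas k (Set.Icc (0:ℝ) 1) = 1 := by
    rw [nuMeas_Icc k hk (Set.mem_Icc.2 ⟨zero_le_one, le_rfl⟩), one_pow,
      ENNReal.ofReal_one]
  rw [← measure_add_measure_compl (measurableSet_Icc (a := (0:ℝ)) (b := 1)), h1,
    nuMeas_compl, add_zero]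

private lemma nuMeas_moment (k : ℕ) (hk : 1 ≤ k) (n : ℕ) :
    ∫ x, (1 - x) ^ n ∂(nuMeas k) = 1 / (((n + k).choose k : ℝ)) := by
  have hd : (fun v : ℝ => ENNReal.ofReal ((k : ℝ) * v ^ (k - 1)))
      = fun v : ℝ => (((k : ℝ) * v ^ (k - 1)).toNNReal : ℝ≥0∞) := rfl
  have hmeas : Measurable fun v : ℝ => ((k : ℝ) * v ^ (k - 1)).toNNReal :=
    (((measurable_id.pow_const (k - 1)).const_mul _)).real_toNNReal
  rw [nuMeas, hd, integral_withDensity_eq_integral_smul hmeas]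
  have hcongr : ∫ x in Set.Icc (0:ℝ) 1,
        (((k : ℝ) * x ^ (k - 1)).toNNReal) • (1 - x) ^ n
      = ∫ x in Set.Icc (0:ℝ) 1, ((k : ℝ) * x ^ (k - 1)) * (1 - x) ^ n := by
    apply setIntegral_congr_fun measurableSet_Icc
    intro x hx
    have hx0 : (0:ℝ) ≤ x := hx.1
    have h0 : (0:ℝ) ≤ (k : ℝ) * x ^ (k - 1) := by positivity
    simp only [NNReal.smul_def, Real.coe_toNNReal _ h0, smul_eq_mul]
  rw [hcongr, MeasureTheory.integral_Icc_eq_integral_Ioc,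
    ← intervalIntegral.integral_of_le zero_le_one]
  have hsplit : ∫ x in (0:ℝ)..1, ((k : ℝ) * x ^ (k - 1)) * (1 - x) ^ n
      = (k : ℝ) * ∫ x in (0:ℝ)..1, x ^ (k - 1) * (1 - x) ^ n := by
    rw [← intervalIntegral.integral_const_mul]
    congr 1; ext x; ring
  rw [hsplit, beta_nat]
  have h1 : (k - 1) + n + 1 = n + k := by omega
  have h2 : (k : ℝ) * ((k - 1).factorial : ℝ) = (k.factorial : ℝ) := by
    rw_mod_cast [Nat.mul_factorial_pred (by omega)]
  have h3 : ((n + k).choose k : ℝ) * (k.factorial : ℝ) * (n.factorial : ℝ)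
      = ((n + k).factorial : ℝ) := by
    have := Nat.choose_mul_factorial_mul_factorial (Nat.le_add_left k n)
    rw [Nat.add_sub_cancel] at this
    exact_mod_cast this
  have hc0 : (((n + k).choose k : ℕ) : ℝ) ≠ 0 := by
    exact_mod_cast (Nat.choose_pos (Nat.le_add_left k n)).ne'
  have hf0 : (((n + k).factorial : ℕ) : ℝ) ≠ 0 := by
    exact_mod_cast (n + k).factorial_ne_zero
  rw [h1]
  rw [show (k : ℝ) * ((((k - 1).factorial : ℝ) * (n.factorial : ℝ)) / ((n + k).factorial : ℝ))
      = ((k.factorial : ℝ) * (n.factorial : ℝ)) / ((n + k).factorial : ℝ) by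
    rw [← h2]; ring]
  rw [div_eq_div_iff hf0 hc0]
  linarith [h3]

private lemma integrable_of_contOn (ρ : Measure ℝ) [IsFiniteMeasure ρ]
    (hres : ρ.restrict (Set.Icc (0:ℝ) 1) = ρ) {f : ℝ → ℝ} (hf : Continuous f) :
    Integrable f ρ := by
  rw [← hres]
  exact hf.continuousOn.integrableOn_compact isCompact_Icc

private lemma integral_poly_eq (ρ : Measure ℝ) [IsFiniteMeasure ρ]
    (hres : ρ.restrict (Set.Icc (0:ℝ) 1) = ρ) (c : ℕ → ℝ)
    (hmom : ∀ n : ℕ, ∫ x, (1 - x) ^ n ∂ρ = c n) (p : Polynomial ℝ) :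
    ∫ x, p.eval x ∂ρ
      = ∑ n ∈ Finset.range ((p.comp (1 - Polynomial.X)).natDegree + 1),
          (p.comp (1 - Polynomial.X)).coeff n * c n := by
  set q := p.comp (1 - Polynomial.X) with hq
  have hev : ∀ x : ℝ, p.eval x
      = ∑ n ∈ Finset.range (q.natDegree + 1), q.coeff n * (1 - x) ^ n := by
    intro x
    have h1 : p.eval x = q.eval (1 - x) := by
      rw [hq, Polynomial.eval_comp]
      simp
    rw [h1, Polynomial.eval_eq_sum_range]
  have hint : ∀ n : ℕ, Integrable (fun x : ℝ => q.coeff n * (1 - x) ^ n) ρ := by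
    intro n
    exact integrable_of_contOn ρ hres (by continuity)
  calc ∫ x, p.eval x ∂ρ
      = ∫ x, ∑ n ∈ Finset.range (q.natDegree + 1), q.coeff n * (1 - x) ^ n ∂ρ := by
        simp_rw [hev]
    _ = ∑ n ∈ Finset.range (q.natDegree + 1), ∫ x, q.coeff n * (1 - x) ^ n ∂ρ :=
        integral_finset_sum _ fun n _ => hint n
    _ = ∑ n ∈ Finset.range (q.natDegree + 1), q.coeff n * c n := by
        refine Finset.sum_congr rfl fun n _ => ?_
        rw [MeasureTheory.integral_const_mul, hmom n]

private lemma abs_integral_diff_le (ρ : Measure ℝ) [IsProbabilityMeasure ρ]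
    (hres : ρ.restrict (Set.Icc (0:ℝ) 1) = ρ) {f g : ℝ → ℝ}
    (hf : Continuous f) (hg : Continuous g) {ε : ℝ}
    (hb : ∀ x ∈ Set.Icc (0:ℝ) 1, |f x - g x| ≤ ε) :
    |(∫ x, f x ∂ρ) - ∫ x, g x ∂ρ| ≤ ε := by
  rw [← integral_sub (integrable_of_contOn ρ hres hf) (integrable_of_contOn ρ hres hg)]
  have hae : ∀ᵐ x ∂ρ, ‖f x - g x‖ ≤ ε := by
    rw [← hres]
    exact (ae_restrict_iff' measurableSet_Icc).2
      (ae_of_all _ fun x hx => by rw [Real.norm_eq_abs]; exact hb x hx)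
  have := norm_integral_le_of_norm_le_const (μ := ρ) hae
  simpa [Real.norm_eq_abs] using this

private lemma exists_poly_close {f : ℝ → ℝ} (hf : Continuous f) {ε : ℝ} (hε : 0 < ε) :
    ∃ p : Polynomial ℝ, ∀ x ∈ Set.Icc (0:ℝ) 1, |f x - p.eval x| ≤ ε := by
  set I : Set ℝ := Set.Icc (0:ℝ) 1 with hI
  let g : C(I, ℝ) := ⟨fun x => f x, hf.comp continuous_subtype_val⟩
  have hmem : g ∈ (polynomialFunctions I).topologicalClosure := by
    rw [polynomialFunctions.topologicalClosure]
    trivial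
  rw [← SetLike.mem_coe, Subalgebra.topologicalClosure_coe] at hmem
  obtain ⟨b, hb, hdist⟩ := Metric.mem_closure_iff.mp hmem ε hε
  rw [SetLike.mem_coe] at hb
  rw [← SetLike.mem_coe, polynomialFunctions_coe] at hb
  obtain ⟨p, rfl⟩ := hb
  refine ⟨p, fun x hx => ?_⟩
  have h1 : dist (g ⟨x, hx⟩) ((Polynomial.toContinuousMapOnAlgHom I p) ⟨x, hx⟩)
      ≤ dist g (Polynomial.toContinuousMapOnAlgHom I p) :=
    ContinuousMap.dist_apply_le_dist _
  have h2 : dist (g ⟨x, hx⟩) ((Polynomial.toContinuousMapOnAlgHom I p) ⟨x, hx⟩)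
      = |f x - p.eval x| := by
    simp [g, Real.dist_eq, Polynomial.toContinuousMapOnAlgHom, Polynomial.toContinuousMapOn,
      Polynomial.toContinuousMap]
  rw [← h2]
  exact h1.trans (le_of_lt (by simpa using hdist))

/-- Hausdorff moment problem instance (Lemma 1): if `μ` is a Borel probability measure
supported on `[0,1]` such that `∫ (1−v)^{q−k} dμ(v) = 1/C(q,k)` for every integer
`q ≥ k` (where `k ≥ 1`), then `μ` is uniquely determined, with distribution function
`F(v) = v^k`: `μ([0,v]) = v^k` for every `v ∈ [0,1]`. -/
theorem hausdorff_moment_unique (k : ℕ) (hk : 1 ≤ k)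
    (μ : Measure ℝ) [IsProbabilityMeasure μ]
    (hsupp : μ (Set.Icc (0 : ℝ) 1)ᶜ = 0)
    (hmom : ∀ q : ℕ, k ≤ q → ∫ v, (1 - v) ^ (q - k) ∂μ = 1 / (q.choose k : ℝ)) :
    ∀ v ∈ Set.Icc (0 : ℝ) 1, μ (Set.Icc 0 v) = ENNReal.ofReal (v ^ k) := by
  haveI hνp : IsProbabilityMeasure (nuMeas k) := nuMeas_prob k hk
  have hresμ : μ.restrict (Set.Icc (0:ℝ) 1) = μ := by
    apply Measure.restrict_eq_self_of_ae_mem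
    rw [MeasureTheory.ae_iff]
    exact hsupp
  have hresν : (nuMeas k).restrict (Set.Icc (0:ℝ) 1) = nuMeas k := by
    apply Measure.restrict_eq_self_of_ae_mem
    rw [MeasureTheory.ae_iff]
    exact nuMeas_compl k
  set c : ℕ → ℝ := fun n => 1 / (((n + k).choose k : ℝ)) with hc
  have hmomμ : ∀ n : ℕ, ∫ x, (1 - x) ^ n ∂μ = c n := by
    intro n
    have := hmom (n + k) (Nat.le_add_left k n)
    rwa [Nat.add_sub_cancel] at this
  have hmomν : ∀ n : ℕ, ∫ x, (1 - x) ^ n ∂(nuMeas k) = c n :=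
    fun n => nuMeas_moment k hk n
  have hpoly : ∀ p : Polynomial ℝ, ∫ x, p.eval x ∂μ = ∫ x, p.eval x ∂(nuMeas k) := by
    intro p
    rw [integral_poly_eq μ hresμ c hmomμ p, integral_poly_eq (nuMeas k) hresν c hmomν p]
  have hcont : ∀ f : ℝ → ℝ, Continuous f → ∫ x, f x ∂μ = ∫ x, f x ∂(nuMeas k) := by
    intro f hf
    have key : ∀ ε : ℝ, 0 < ε → |(∫ x, f x ∂μ) - ∫ x, f x ∂(nuMeas k)| ≤ ε := by
      intro ε hε
      obtain ⟨p, hp⟩ := exists_poly_close hf (half_pos hε)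
      have h1 : |(∫ x, f x ∂μ) - ∫ x, p.eval x ∂μ| ≤ ε / 2 :=
        abs_integral_diff_le μ hresμ hf p.continuous hp
      have h2 : |(∫ x, p.eval x ∂(nuMeas k)) - ∫ x, f x ∂(nuMeas k)| ≤ ε / 2 :=
        abs_integral_diff_le (nuMeas k) hresν p.continuous hf
          (fun x hx => by rw [abs_sub_comm]; exact hp x hx)
      calc |(∫ x, f x ∂μ) - ∫ x, f x ∂(nuMeas k)|
          ≤ |(∫ x, f x ∂μ) - ∫ x, p.eval x ∂μ|
            + |(∫ x, p.eval x ∂(nuMeas k)) - ∫ x, f x ∂(nuMeas k)| := by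
            rw [hpoly p]
            exact abs_sub_le _ _ _
        _ ≤ ε / 2 + ε / 2 := add_le_add h1 h2
        _ = ε := by ring
    have h0 : |(∫ x, f x ∂μ) - ∫ x, f x ∂(nuMeas k)| ≤ 0 := by
      refine le_of_forall_pos_le_add fun ε hε => ?_
      simpa using key ε hε
    have := abs_eq_zero.1 (le_antisymm h0 (abs_nonneg _))
    linarith [this]
  have hμν : μ = nuMeas k := by
    apply ext_of_forall_lintegral_eq_of_IsFiniteMeasure
    intro f
    have hcf : Continuous fun x : ℝ => ((f x : ℝ)) :=
      NNReal.continuous_coe.comp f.continuous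
    have h1 := BoundedContinuousFunction.toReal_lintegral_coe_eq_integral f μ
    have h2 := BoundedContinuousFunction.toReal_lintegral_coe_eq_integral f (nuMeas k)
    have hfin1 : (∫⁻ x, (f x : ℝ≥0∞) ∂μ) ≠ ⊤ :=
      (BoundedContinuousFunction.lintegral_lt_top_of_nnreal μ f).ne
    have hfin2 : (∫⁻ x, (f x : ℝ≥0∞) ∂(nuMeas k)) ≠ ⊤ :=
      (BoundedContinuousFunction.lintegral_lt_top_of_nnreal (nuMeas k) f).ne
    rw [← ENNReal.toReal_eq_toReal_iff' hfin1 hfin2, h1, h2]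
    exact hcont _ hcf
  intro v hv
  rw [hμν]
  exact nuMeas_Icc k hk hv
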